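/- For all ζ, ζ_*, ζ', ζ'_* ∈ 𝓔 and all ω ∈ S²: (i) if (v,v_*) ∈ E[ζ,ζ_*,ζ',ζ'_*] with v ≠ v_*, then S_ω[ζ,ζ_*,ζ',ζ'_*](v,v_*) ∈ E[ζ',ζ'_*,ζ,ζ_*]; (ii) writing F[ζ,ζ_*,ζ',ζ'_*] := {(v,v_*) ∈ ℝ³×ℝ³ : Δ(v,v_*,ζ,ζ_*,ζ',ζ'_*) > 0 and v ≠ v_*}, the map S_ω[ζ,ζ_*,ζ',ζ'_*] maps F[ζ,ζ_*,ζ',ζ'_*] bijectively onto F[ζ',ζ'_*,ζ,ζ_*], and its inverse is S_ω[ζ',ζ'_*,ζ,ζ_*]. -/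

import Mathlib

open MeasureTheory Real

noncomputable section

/-- ℝ³ with its Euclidean structure. -/
abbrev V3 := EuclideanSpace ℝ (Fin 3)

/-- `T_ω[V] = V - 2 (ω ⬝ V) ω`, the reflection with respect to `(ℝω)^⊥`. -/
def Tmap (ω V : V3) : V3 := V - (2 * (inner ℝ ω V : ℝ)) • ω

/-- `Δ(v, v⋆, ζ, ζ⋆, ζ', ζ'⋆) = ¼|v − v⋆|² + (1/m)(ε(ζ) + ε(ζ⋆) − ε(ζ') − ε(ζ'⋆))`. -/
def Δcol (m : ℝ) {𝓔 : Type*} (ε : 𝓔 → ℝ) (v vs : V3) (z zs z' zs' : 𝓔) : ℝ :=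
  (1 / 4) * ‖v - vs‖ ^ 2 + (1 / m) * (ε z + ε zs - ε z' - ε zs')

/-- `E[ζ,ζ⋆,ζ',ζ'⋆]`, the set of pre-collision velocity pairs making the collision possible. -/
def Ecol (m : ℝ) {𝓔 : Type*} (ε : 𝓔 → ℝ) (z zs z' zs' : 𝓔) : Set (V3 × V3) :=
  {p | 0 ≤ Δcol m ε p.1 p.2 z zs z' zs'}

/-- `F[ζ,ζ⋆,ζ',ζ'⋆] = {(v,v⋆) : Δ > 0 and v ≠ v⋆}`. -/
def Fcol (m : ℝ) {𝓔 : Type*} (ε : 𝓔 → ℝ) (z zs z' zs' : 𝓔) : Set (V3 × V3) :=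
  {p | 0 < Δcol m ε p.1 p.2 z zs z' zs' ∧ p.1 ≠ p.2}

/-- The collision transformation `S_ω[ζ,ζ⋆,ζ',ζ'⋆] (v, v⋆) = (v', v'⋆)`. -/
def Scol (m : ℝ) {𝓔 : Type*} (ε : 𝓔 → ℝ) (z zs z' zs' : 𝓔) (ω : V3) (p : V3 × V3) :
    V3 × V3 :=
  ((1 / 2 : ℝ) • (p.1 + p.2) +
      Real.sqrt (Δcol m ε p.1 p.2 z zs z' zs') • Tmap ω (‖p.1 - p.2‖⁻¹ • (p.1 - p.2)),
    (1 / 2 : ℝ) • (p.1 + p.2) -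
      Real.sqrt (Δcol m ε p.1 p.2 z zs z' zs') • Tmap ω (‖p.1 - p.2‖⁻¹ • (p.1 - p.2)))

lemma Tmap_inner (ω : V3) (hω : ‖ω‖ = 1) (V : V3) :
    (inner ℝ ω (Tmap ω V) : ℝ) = - inner ℝ ω V := by
  have h : (inner ℝ ω ω : ℝ) = 1 := by
    rw [real_inner_self_eq_norm_sq, hω]; norm_num
  rw [Tmap, inner_sub_right, real_inner_smul_right, h]
  ring

lemma Tmap_invol (ω : V3) (hω : ‖ω‖ = 1) (V : V3) : Tmap ω (Tmap ω V) = V := by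
  rw [Tmap, Tmap_inner ω hω V]
  unfold Tmap
  module

lemma Tmap_norm (ω : V3) (hω : ‖ω‖ = 1) (V : V3) : ‖Tmap ω V‖ = ‖V‖ := by
  have h1 : (inner ℝ V ((2 * (inner ℝ ω V : ℝ)) • ω) : ℝ) = 2 * inner ℝ ω V * inner ℝ ω V := by
    rw [real_inner_smul_right, real_inner_comm]
  have h2 : ‖(2 * (inner ℝ ω V : ℝ)) • ω‖ ^ 2 = (2 * (inner ℝ ω V : ℝ)) ^ 2 := by
    rw [norm_smul, hω, mul_one]; rw [Real.norm_eq_abs, sq_abs]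
  have h : ‖Tmap ω V‖ ^ 2 = ‖V‖ ^ 2 := by
    rw [Tmap, @norm_sub_sq_real, h1, h2]; ring
  nlinarith [norm_nonneg (Tmap ω V), norm_nonneg V]

lemma scol_sub (m : ℝ) {𝓔 : Type*} (ε : 𝓔 → ℝ) (z zs z' zs' : 𝓔) (ω : V3) (p : V3 × V3) :
    (Scol m ε z zs z' zs' ω p).1 - (Scol m ε z zs z' zs' ω p).2 =
      (2 * Real.sqrt (Δcol m ε p.1 p.2 z zs z' zs')) •
        Tmap ω (‖p.1 - p.2‖⁻¹ • (p.1 - p.2)) := by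
  simp only [Scol]; module

lemma scol_sum (m : ℝ) {𝓔 : Type*} (ε : 𝓔 → ℝ) (z zs z' zs' : 𝓔) (ω : V3) (p : V3 × V3) :
    (Scol m ε z zs z' zs' ω p).1 + (Scol m ε z zs z' zs' ω p).2 = p.1 + p.2 := by
  simp only [Scol]; module

lemma scol_norm_sub (m : ℝ) {𝓔 : Type*} (ε : 𝓔 → ℝ) (z zs z' zs' : 𝓔) (ω : V3)
    (hω : ‖ω‖ = 1) (p : V3 × V3) (hne : p.1 ≠ p.2) :
    ‖(Scol m ε z zs z' zs' ω p).1 - (Scol m ε z zs z' zs' ω p).2‖ =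
      2 * Real.sqrt (Δcol m ε p.1 p.2 z zs z' zs') := by
  have hn : (0:ℝ) < ‖p.1 - p.2‖ := norm_pos_iff.mpr (sub_ne_zero.mpr hne)
  rw [scol_sub, norm_smul, Tmap_norm ω hω, norm_smul, Real.norm_eq_abs, Real.norm_eq_abs,
    abs_inv, abs_norm, inv_mul_cancel₀ hn.ne', mul_one,
    abs_of_nonneg (by positivity : (0:ℝ) ≤ 2 * Real.sqrt (Δcol m ε p.1 p.2 z zs z' zs'))]

lemma scol_delta (m : ℝ) {𝓔 : Type*} (ε : 𝓔 → ℝ) (z zs z' zs' : 𝓔) (ω : V3)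
    (hω : ‖ω‖ = 1) (p : V3 × V3) (hd : 0 ≤ Δcol m ε p.1 p.2 z zs z' zs')
    (hne : p.1 ≠ p.2) :
    Δcol m ε (Scol m ε z zs z' zs' ω p).1 (Scol m ε z zs z' zs' ω p).2 z' zs' z zs =
      (1 / 4) * ‖p.1 - p.2‖ ^ 2 := by
  have hnorm := scol_norm_sub m ε z zs z' zs' ω hω p hne
  rw [Δcol, hnorm, mul_pow, Real.sq_sqrt hd]
  rw [show Δcol m ε p.1 p.2 z zs z' zs' =
    (1 / 4) * ‖p.1 - p.2‖ ^ 2 + (1 / m) * (ε z + ε zs - ε z' - ε zs') from rfl]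
  ring

lemma scol_mem_F (m : ℝ) {𝓔 : Type*} (ε : 𝓔 → ℝ) (z zs z' zs' : 𝓔) (ω : V3)
    (hω : ‖ω‖ = 1) (p : V3 × V3) (hp : p ∈ Fcol m ε z zs z' zs') :
    Scol m ε z zs z' zs' ω p ∈ Fcol m ε z' zs' z zs := by
  obtain ⟨hd, hne⟩ := hp
  have hn : (0:ℝ) < ‖p.1 - p.2‖ := norm_pos_iff.mpr (sub_ne_zero.mpr hne)
  constructor
  · rw [scol_delta m ε z zs z' zs' ω hω p hd.le hne]
    positivity
  · intro h
    have h2 := scol_norm_sub m ε z zs z' zs' ω hω p hne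
    rw [h, sub_self, norm_zero] at h2
    have hs : 0 < Real.sqrt (Δcol m ε p.1 p.2 z zs z' zs') := Real.sqrt_pos.mpr hd
    linarith

lemma scol_inv (m : ℝ) {𝓔 : Type*} (ε : 𝓔 → ℝ) (z zs z' zs' : 𝓔) (ω : V3)
    (hω : ‖ω‖ = 1) (p : V3 × V3) (hd : 0 < Δcol m ε p.1 p.2 z zs z' zs')
    (hne : p.1 ≠ p.2) :
    Scol m ε z' zs' z zs ω (Scol m ε z zs z' zs' ω p) = p := by
  have hn : (0:ℝ) < ‖p.1 - p.2‖ := norm_pos_iff.mpr (sub_ne_zero.mpr hne)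
  have hs : 0 < Real.sqrt (Δcol m ε p.1 p.2 z zs z' zs') := Real.sqrt_pos.mpr hd
  set q := Scol m ε z zs z' zs' ω p with hq
  have hsub := scol_sub m ε z zs z' zs' ω p
  have hsum := scol_sum m ε z zs z' zs' ω p
  have hqd := scol_delta m ε z zs z' zs' ω hω p hd.le hne
  have hnormq := scol_norm_sub m ε z zs z' zs' ω hω p hne
  have hsqrt : Real.sqrt (Δcol m ε q.1 q.2 z' zs' z zs) = ‖p.1 - p.2‖ / 2 := by
    rw [hqd, show (1/4:ℝ) * ‖p.1 - p.2‖ ^ 2 = (‖p.1 - p.2‖ / 2) ^ 2 by ring]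
    exact Real.sqrt_sq (by positivity)
  have hu' : ‖q.1 - q.2‖⁻¹ • (q.1 - q.2) = Tmap ω (‖p.1 - p.2‖⁻¹ • (p.1 - p.2)) := by
    rw [hnormq, hsub, smul_smul, inv_mul_cancel₀ (by positivity), one_smul]
  have hstep : Scol m ε z' zs' z zs ω q =
      ((1/2:ℝ) • (p.1 + p.2) + (‖p.1 - p.2‖ / 2) • (‖p.1 - p.2‖⁻¹ • (p.1 - p.2)),
       (1/2:ℝ) • (p.1 + p.2) - (‖p.1 - p.2‖ / 2) • (‖p.1 - p.2‖⁻¹ • (p.1 - p.2))) := by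
    rw [Scol, hsqrt, hu', Tmap_invol ω hω, hsum]
  rw [hstep]
  have hcomp : (‖p.1 - p.2‖ / 2) • (‖p.1 - p.2‖⁻¹ • (p.1 - p.2)) =
      (1/2:ℝ) • (p.1 - p.2) := by
    rw [smul_smul]
    congr 1
    field_simp
  rw [hcomp]
  exact Prod.ext (by module) (by module)


/-- **Lemma 1 (the collision transformation is a well-defined bijection).**
(i) If `(v,v⋆) ∈ E[ζ,ζ⋆,ζ',ζ'⋆]` with `v ≠ v⋆`, then
`S_ω[ζ,ζ⋆,ζ',ζ'⋆](v,v⋆) ∈ E[ζ',ζ'⋆,ζ,ζ⋆]`; (ii) `S_ω[ζ,ζ⋆,ζ',ζ'⋆]` maps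
`F[ζ,ζ⋆,ζ',ζ'⋆]` bijectively onto `F[ζ',ζ'⋆,ζ,ζ⋆]` and its inverse on these sets is
`S_ω[ζ',ζ'⋆,ζ,ζ⋆]`. -/
theorem collision_map_bijection
    {𝓔 : Type*} [MeasurableSpace 𝓔] (μ : Measure 𝓔) (hμ : μ Set.univ ≠ 0)
    (m : ℝ) (hm : 0 < m) (ε : 𝓔 → ℝ) (hε : Measurable ε)
    (z zs z' zs' : 𝓔) (ω : V3) (hω : ‖ω‖ = 1) :
    (∀ p ∈ Ecol m ε z zs z' zs', p.1 ≠ p.2 →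
        Scol m ε z zs z' zs' ω p ∈ Ecol m ε z' zs' z zs) ∧
    Set.BijOn (Scol m ε z zs z' zs' ω) (Fcol m ε z zs z' zs') (Fcol m ε z' zs' z zs) ∧
    Set.InvOn (Scol m ε z' zs' z zs ω) (Scol m ε z zs z' zs' ω)
      (Fcol m ε z zs z' zs') (Fcol m ε z' zs' z zs) := by
  have hmapsF : Set.MapsTo (Scol m ε z zs z' zs' ω) (Fcol m ε z zs z' zs')
      (Fcol m ε z' zs' z zs) := fun p hp => scol_mem_F m ε z zs z' zs' ω hω p hp
  have hmapsF' : Set.MapsTo (Scol m ε z' zs' z zs ω) (Fcol m ε z' zs' z zs)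
      (Fcol m ε z zs z' zs') := fun p hp => scol_mem_F m ε z' zs' z zs ω hω p hp
  have hinv : Set.InvOn (Scol m ε z' zs' z zs ω) (Scol m ε z zs z' zs' ω)
      (Fcol m ε z zs z' zs') (Fcol m ε z' zs' z zs) :=
    ⟨fun p hp => scol_inv m ε z zs z' zs' ω hω p hp.1 hp.2,
     fun p hp => scol_inv m ε z' zs' z zs ω hω p hp.1 hp.2⟩
  refine ⟨?_, hinv.bijOn hmapsF hmapsF', hinv⟩
  intro p hp hne
  show 0 ≤ Δcol m ε (Scol m ε z zs z' zs' ω p).1 (Scol m ε z zs z' zs' ω p).2 z' zs' z zs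
  rw [scol_delta m ε z zs z' zs' ω hω p hp hne]
  positivity

end
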